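/- Let χ(ξ) = −(c+K₁)cosh(ξ) + K₁ with K₁ < 0 and c > |K₁| > 0, and let u(ξ) = χ(ξ) + √(χ(ξ)² − c²) (defined where χ² ≥ c²). Then u(0) = −c and the jump of the derivative of (u−c)² at 0 satisfies lim_{ξ↓0} ((u−c)²)'(ξ) − lim_{ξ↑0} ((u−c)²)'(ξ) = −8c√(c(c+K₁)); in particular (u−c)² is not continuously differentiable at 0. -/

import Mathlib

open Real Set Filter

noncomputable def pX (c K₁ : ℝ) (ξ : ℝ) : ℝ := -(c + K₁) * Real.cosh ξ + K₁
noncomputable def pS (c K₁ : ℝ) (ξ : ℝ) : ℝ := Real.sqrt (pX c K₁ ξ ^ 2 - c ^ 2)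
noncomputable def pA (c K₁ : ℝ) (ξ : ℝ) : ℝ := Real.sqrt ((c + K₁) * Real.cosh ξ + (c - K₁))
noncomputable def pg (c K₁ : ℝ) (ξ : ℝ) : ℝ := (pX c K₁ ξ + pS c K₁ ξ - c) ^ 2
noncomputable def pW (c K₁ : ℝ) (ξ : ℝ) : ℝ := -(c + K₁) * Real.sinh ξ
noncomputable def pF (c K₁ ε : ℝ) (ξ : ℝ) : ℝ :=
  2 * (pX c K₁ ξ + pS c K₁ ξ - c) * pW c K₁ ξ + 2 * pX c K₁ ξ * pW c K₁ ξ
    + 2 * pX c K₁ ξ * (pX c K₁ ξ - c) * (ε * Real.sqrt (2 * (c + K₁)) * Real.cosh (ξ / 2) / pA c K₁ ξ)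

lemma cosh_key (ξ : ℝ) : Real.cosh ξ = 1 + 2 * Real.sinh (ξ / 2) ^ 2 := by
  have h := Real.cosh_two_mul (ξ / 2)
  rw [show 2 * (ξ / 2) = ξ by ring] at h
  rw [h, Real.cosh_sq]; ring

lemma sinh_key (ξ : ℝ) : Real.sinh ξ = 2 * Real.sinh (ξ / 2) * Real.cosh (ξ / 2) := by
  have h := Real.sinh_two_mul (ξ / 2)
  rw [show 2 * (ξ / 2) = ξ by ring] at h
  rw [h]

lemma pfac (c K₁ : ℝ) (ξ : ℝ) :
    pX c K₁ ξ ^ 2 - c ^ 2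
      = 2 * (c + K₁) * Real.sinh (ξ / 2) ^ 2 * ((c + K₁) * Real.cosh ξ + (c - K₁)) := by
  unfold pX
  rw [cosh_key ξ]
  ring

lemma pBpos (c K₁ : ℝ) (hK₁ : K₁ < 0) (hc : -K₁ < c) (ξ : ℝ) :
    0 < (c + K₁) * Real.cosh ξ + (c - K₁) := by
  nlinarith [Real.one_le_cosh ξ]

lemma pGpos (c K₁ : ℝ) (hK₁ : K₁ < 0) (hc : -K₁ < c) {ξ : ℝ} (hξ : ξ ≠ 0) :
    0 < pX c K₁ ξ ^ 2 - c ^ 2 := by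
  rw [pfac]
  have hs : Real.sinh (ξ / 2) ≠ 0 := by
    rcases lt_or_gt_of_ne hξ with h | h
    · exact ne_of_lt (Real.sinh_neg_iff.mpr (by linarith))
    · exact ne_of_gt (Real.sinh_pos_iff.mpr (by linarith))
  have hB := pBpos c K₁ hK₁ hc ξ
  have ha : 0 < c + K₁ := by linarith
  positivity

lemma pderiv (c K₁ : ℝ) (hK₁ : K₁ < 0) (hc : -K₁ < c) {ξ : ℝ} (hξ : ξ ≠ 0) :
    deriv (pg c K₁) ξ
      = 2 * (pX c K₁ ξ + pS c K₁ ξ - c)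
        * (pW c K₁ ξ + 2 * pX c K₁ ξ * pW c K₁ ξ / (2 * pS c K₁ ξ)) := by
  have hXd : HasDerivAt (pX c K₁) (pW c K₁ ξ) ξ := by
    unfold pX pW
    exact ((Real.hasDerivAt_cosh ξ).const_mul (-(c + K₁))).add_const K₁
  have hGd : HasDerivAt (fun t => pX c K₁ t ^ 2 - c ^ 2) (2 * pX c K₁ ξ * pW c K₁ ξ) ξ := by
    have h := (hXd.fun_pow 2).sub_const (c ^ 2)
    refine h.congr_deriv ?_
    norm_num
  have hSd : HasDerivAt (pS c K₁) (2 * pX c K₁ ξ * pW c K₁ ξ / (2 * pS c K₁ ξ)) ξ := by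
    have h := hGd.sqrt (ne_of_gt (pGpos c K₁ hK₁ hc hξ))
    exact h
  have hgd : HasDerivAt (pg c K₁)
      (2 * (pX c K₁ ξ + pS c K₁ ξ - c)
        * (pW c K₁ ξ + 2 * pX c K₁ ξ * pW c K₁ ξ / (2 * pS c K₁ ξ))) ξ := by
    have h := ((hXd.add hSd).sub_const c).fun_pow 2
    refine h.congr_deriv ?_
    norm_num
  exact hgd.deriv

lemma pS_eq_pos (c K₁ : ℝ) (hK₁ : K₁ < 0) (hc : -K₁ < c) {ξ : ℝ} (hξ : 0 < ξ) :
    pS c K₁ ξ = Real.sqrt (2 * (c + K₁)) * (Real.sinh (ξ / 2) * pA c K₁ ξ) := by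
  have ha : 0 < c + K₁ := by linarith
  have hh : 0 ≤ Real.sinh (ξ / 2) := le_of_lt (Real.sinh_pos_iff.mpr (by linarith))
  have hB := pBpos c K₁ hK₁ hc ξ
  unfold pS pA
  rw [pfac, show 2 * (c + K₁) * Real.sinh (ξ / 2) ^ 2 * ((c + K₁) * Real.cosh ξ + (c - K₁))
      = (2 * (c + K₁)) * (Real.sinh (ξ / 2) ^ 2 * ((c + K₁) * Real.cosh ξ + (c - K₁))) by ring,
    Real.sqrt_mul (by positivity), Real.sqrt_mul (sq_nonneg _), Real.sqrt_sq hh]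

lemma pS_eq_neg (c K₁ : ℝ) (hK₁ : K₁ < 0) (hc : -K₁ < c) {ξ : ℝ} (hξ : ξ < 0) :
    pS c K₁ ξ = Real.sqrt (2 * (c + K₁)) * (-Real.sinh (ξ / 2) * pA c K₁ ξ) := by
  have ha : 0 < c + K₁ := by linarith
  have hh : 0 ≤ -Real.sinh (ξ / 2) := by
    have := Real.sinh_neg_iff.mpr (show ξ / 2 < 0 by linarith)
    linarith
  have hB := pBpos c K₁ hK₁ hc ξ
  unfold pS pA
  rw [pfac, show 2 * (c + K₁) * Real.sinh (ξ / 2) ^ 2 * ((c + K₁) * Real.cosh ξ + (c - K₁))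
      = (2 * (c + K₁)) * ((-Real.sinh (ξ / 2)) ^ 2 * ((c + K₁) * Real.cosh ξ + (c - K₁))) by ring,
    Real.sqrt_mul (by positivity), Real.sqrt_mul (sq_nonneg _), Real.sqrt_sq hh]

lemma pderiv_pos (c K₁ : ℝ) (hK₁ : K₁ < 0) (hc : -K₁ < c) {ξ : ℝ} (hξ : 0 < ξ) :
    deriv (pg c K₁) ξ = pF c K₁ (-1) ξ := by
  have ha : 0 < c + K₁ := by linarith
  have hh : 0 < Real.sinh (ξ / 2) := Real.sinh_pos_iff.mpr (by linarith)
  have hA : 0 < pA c K₁ ξ := Real.sqrt_pos.mpr (pBpos c K₁ hK₁ hc ξ)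
  have hq : 0 < Real.sqrt (2 * (c + K₁)) := Real.sqrt_pos.mpr (by positivity)
  have hqq : Real.sqrt (2 * (c + K₁)) * Real.sqrt (2 * (c + K₁)) = 2 * (c + K₁) :=
    Real.mul_self_sqrt (by positivity)
  have hW : pW c K₁ ξ = -(Real.sqrt (2 * (c + K₁)) * Real.sqrt (2 * (c + K₁)))
      * (Real.sinh (ξ / 2) * Real.cosh (ξ / 2)) := by
    unfold pW; rw [hqq, sinh_key ξ]; ring
  rw [pderiv c K₁ hK₁ hc (ne_of_gt hξ)]
  unfold pF
  rw [pS_eq_pos c K₁ hK₁ hc hξ, hW]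
  field_simp
  ring

lemma pderiv_neg (c K₁ : ℝ) (hK₁ : K₁ < 0) (hc : -K₁ < c) {ξ : ℝ} (hξ : ξ < 0) :
    deriv (pg c K₁) ξ = pF c K₁ 1 ξ := by
  have ha : 0 < c + K₁ := by linarith
  have hh : Real.sinh (ξ / 2) < 0 := Real.sinh_neg_iff.mpr (by linarith)
  have hA : 0 < pA c K₁ ξ := Real.sqrt_pos.mpr (pBpos c K₁ hK₁ hc ξ)
  have hq : 0 < Real.sqrt (2 * (c + K₁)) := Real.sqrt_pos.mpr (by positivity)
  have hqq : Real.sqrt (2 * (c + K₁)) * Real.sqrt (2 * (c + K₁)) = 2 * (c + K₁) :=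
    Real.mul_self_sqrt (by positivity)
  have hW : pW c K₁ ξ = -(Real.sqrt (2 * (c + K₁)) * Real.sqrt (2 * (c + K₁)))
      * (Real.sinh (ξ / 2) * Real.cosh (ξ / 2)) := by
    unfold pW; rw [hqq, sinh_key ξ]; ring
  rw [pderiv c K₁ hK₁ hc (ne_of_lt hξ)]
  unfold pF
  rw [pS_eq_neg c K₁ hK₁ hc hξ, hW]
  have hh' : Real.sinh (ξ / 2) ≠ 0 := ne_of_lt hh
  field_simp
  ring

lemma pF_cont (c K₁ ε : ℝ) (hK₁ : K₁ < 0) (hc : -K₁ < c) : Continuous (pF c K₁ ε) := by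
  have hA : ∀ ξ : ℝ, pA c K₁ ξ ≠ 0 :=
    fun ξ => ne_of_gt (Real.sqrt_pos.mpr (pBpos c K₁ hK₁ hc ξ))
  have hcX : Continuous (pX c K₁) := by unfold pX; continuity
  have hcS : Continuous (pS c K₁) := by
    unfold pS; exact ((hcX.pow 2).sub continuous_const).sqrt
  have hcA : Continuous (pA c K₁) := by unfold pA; continuity
  have hcW : Continuous (pW c K₁) := by unfold pW; continuity
  have hdiv : Continuous fun ξ : ℝ =>
      ε * Real.sqrt (2 * (c + K₁)) * Real.cosh (ξ / 2) / pA c K₁ ξ := by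
    refine Continuous.div ?_ hcA hA
    exact continuous_const.mul (Real.continuous_cosh.comp (continuous_id.div_const 2))
  unfold pF
  refine Continuous.add (Continuous.add ?_ ?_) ?_
  · exact (continuous_const.mul ((hcX.add hcS).sub continuous_const)).mul hcW
  · exact (continuous_const.mul hcX).mul hcW
  · exact ((continuous_const.mul hcX).mul (hcX.sub continuous_const)).mul hdiv

lemma pF_zero (c K₁ : ℝ) (hK₁ : K₁ < 0) (hc : -K₁ < c) (ε : ℝ) :
    pF c K₁ ε 0 = ε * (4 * c * Real.sqrt (c * (c + K₁))) := by
  have hc0 : 0 < c := by linarith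
  have ha : 0 < c + K₁ := by linarith
  have hX0 : pX c K₁ 0 = -c := by unfold pX; rw [Real.cosh_zero]; ring
  have hS0 : pS c K₁ 0 = 0 := by
    unfold pS; rw [hX0, show (-c) ^ 2 - c ^ 2 = 0 by ring, Real.sqrt_zero]
  have hA0 : pA c K₁ 0 = Real.sqrt (2 * c) := by
    unfold pA
    rw [show (c + K₁) * Real.cosh 0 + (c - K₁) = 2 * c by rw [Real.cosh_zero]; ring]
  have hkey : Real.sqrt (c * (c + K₁)) * Real.sqrt (2 * c) = c * Real.sqrt (2 * (c + K₁)) := by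
    rw [← Real.sqrt_mul (by positivity),
      show c * (c + K₁) * (2 * c) = c ^ 2 * (2 * (c + K₁)) by ring,
      Real.sqrt_mul (sq_nonneg c), Real.sqrt_sq hc0.le]
  have h2c : Real.sqrt (2 * c) ≠ 0 := ne_of_gt (Real.sqrt_pos.mpr (by positivity))
  have hinv : Real.sqrt (2 * (c + K₁)) / Real.sqrt (2 * c)
      = Real.sqrt (c * (c + K₁)) / c := by
    rw [div_eq_div_iff h2c (ne_of_gt hc0)]
    linear_combination -hkey
  unfold pF pW
  rw [hX0, hS0, hA0, Real.sinh_zero, show (0:ℝ) / 2 = 0 by norm_num, Real.cosh_zero]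
  have hterm : ε * Real.sqrt (2 * (c + K₁)) * 1 / Real.sqrt (2 * c)
      = ε * (Real.sqrt (c * (c + K₁)) / c) := by
    rw [mul_one, mul_div_assoc, hinv]
  rw [hterm]
  field_simp
  ring

lemma pLp_ne (c K₁ : ℝ) (hK₁ : K₁ < 0) (hc : -K₁ < c) :
    0 < 4 * c * Real.sqrt (c * (c + K₁)) := by
  have hc0 : 0 < c := by linarith
  have ha : 0 < c + K₁ := by linarith
  have := Real.sqrt_pos.mpr (show 0 < c * (c + K₁) by positivity)
  positivity

theorem peaked_not_C1 (c K₁ : ℝ) (hK₁ : K₁ < 0) (hc : -K₁ < c)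
    (χ u : ℝ → ℝ)
    (hχ : ∀ ξ : ℝ, χ ξ = -(c + K₁) * Real.cosh ξ + K₁)
    (hu : ∀ ξ : ℝ, u ξ = χ ξ + Real.sqrt (χ ξ ^ 2 - c ^ 2)) :
    u 0 = -c ∧
      ∃ Lp Lm : ℝ,
        Filter.Tendsto (deriv (fun ξ => (u ξ - c) ^ 2))
          (nhdsWithin 0 (Set.Ioi 0)) (nhds Lp) ∧
        Filter.Tendsto (deriv (fun ξ => (u ξ - c) ^ 2))
          (nhdsWithin 0 (Set.Iio 0)) (nhds Lm) ∧
        Lp - Lm = -8 * c * Real.sqrt (c * (c + K₁)) ∧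
        ¬ ContDiffAt ℝ 1 (fun ξ => (u ξ - c) ^ 2) 0 := by
  have hc0 : 0 < c := by linarith
  have hu0 : u 0 = -c := by
    have hχ0 : χ 0 = -c := by rw [hχ, Real.cosh_zero]; ring
    rw [hu, hχ0, show (-c) ^ 2 - c ^ 2 = 0 by ring, Real.sqrt_zero, add_zero]
  have hfeq : (fun ξ => (u ξ - c) ^ 2) = pg c K₁ := by
    funext ξ; rw [hu, hχ]; rfl
  rw [hfeq]
  set L := 4 * c * Real.sqrt (c * (c + K₁)) with hL
  have hLpos := pLp_ne c K₁ hK₁ hc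
  -- tendsto from the right
  have htp : Tendsto (deriv (pg c K₁)) (nhdsWithin 0 (Set.Ioi 0)) (nhds (-L)) := by
    have h1 : Tendsto (pF c K₁ (-1)) (nhdsWithin 0 (Set.Ioi 0)) (nhds (-L)) := by
      have h2 := ((pF_cont c K₁ (-1) hK₁ hc).continuousAt (x := 0)).tendsto
      rw [pF_zero c K₁ hK₁ hc (-1)] at h2
      rw [show (-1 : ℝ) * L = -L by ring] at h2
      exact h2.mono_left nhdsWithin_le_nhds
    refine h1.congr' ?_
    exact eventually_nhdsWithin_of_forall fun ξ hξ => (pderiv_pos c K₁ hK₁ hc hξ).symm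
  have htm : Tendsto (deriv (pg c K₁)) (nhdsWithin 0 (Set.Iio 0)) (nhds L) := by
    have h1 : Tendsto (pF c K₁ 1) (nhdsWithin 0 (Set.Iio 0)) (nhds L) := by
      have h2 := ((pF_cont c K₁ 1 hK₁ hc).continuousAt (x := 0)).tendsto
      rw [pF_zero c K₁ hK₁ hc 1, one_mul] at h2
      exact h2.mono_left nhdsWithin_le_nhds
    refine h1.congr' ?_
    exact eventually_nhdsWithin_of_forall fun ξ hξ => (pderiv_neg c K₁ hK₁ hc hξ).symm
  refine ⟨hu0, -L, L, htp, htm, by rw [hL]; ring, ?_⟩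
  intro hcd
  rw [contDiffAt_one_iff] at hcd
  obtain ⟨f', v, hv, hf'c, hf'd⟩ := hcd
  have hmem : ∀ᶠ x in nhds (0 : ℝ), (fun y => f' y 1) x = deriv (pg c K₁) x := by
    filter_upwards [hv] with x hx
    exact ((hf'd x hx).hasDerivAt.deriv).symm
  have hca : ContinuousAt (fun y => f' y 1) 0 :=
    ((ContinuousLinearMap.apply ℝ ℝ (1:ℝ)).continuous.continuousAt).comp
      (hf'c.continuousAt hv)
  have hct : ContinuousAt (deriv (pg c K₁)) 0 := hca.congr hmem
  have h1 : Tendsto (deriv (pg c K₁)) (nhdsWithin 0 (Set.Ioi 0)) (nhds (deriv (pg c K₁) 0)) :=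
    hct.tendsto.mono_left nhdsWithin_le_nhds
  have h2 : Tendsto (deriv (pg c K₁)) (nhdsWithin 0 (Set.Iio 0)) (nhds (deriv (pg c K₁) 0)) :=
    hct.tendsto.mono_left nhdsWithin_le_nhds
  have e1 : -L = deriv (pg c K₁) 0 := tendsto_nhds_unique htp h1
  have e2 : L = deriv (pg c K₁) 0 := tendsto_nhds_unique htm h2
  linarith
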